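/- arXiv:2411.16261 — 2 statements merged into one kernel-verified Lean document; each statement's English description precedes it below -/
import Mathlib

section
/- Let m > 0 and let c : ℍ → ℝ be a continuous function with c(z) ≥ m for all z ∈ ℍ. If v : ℍ → ℝ is a bounded C² function such that the function w := −Δ_ℍ v + c·v is bounded, then sup_{z ∈ ℍ} |v(z)| ≤ m⁻¹ · sup_{z ∈ ℍ} |w(z)|. -/
/-- The upper half-plane, as a subset of `ℂ`. -/
def UpperH : Set ℂ := {z : ℂ | 0 < z.im}

/-- The hyperbolic Laplacian of `u : ℂ → ℝ` at `z`:
`Δ_ℍ u(z) = (Im z)² (∂²u/∂x² + ∂²u/∂y²)(z)`. -/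
noncomputable def hypLaplacian (u : ℂ → ℝ) (z : ℂ) : ℝ :=
  z.im ^ 2 * (iteratedDeriv 2 (fun t : ℝ => u (z + (t : ℂ))) 0 +
              iteratedDeriv 2 (fun t : ℝ => u (z + (t : ℂ) * Complex.I)) 0)

/-- The hyperbolic distance on the upper half-plane. -/
noncomputable def hypDist (z w : ℂ) : ℝ :=
  2 * Real.arsinh (‖z - w‖ / (2 * Real.sqrt (z.im * w.im)))


open Filter Set Topology in
/-- Second derivative test at a local max. -/
private lemma secondDeriv_nonpos_of_isLocalMax {f : ℝ → ℝ} {a : ℝ}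
    (hd : ∀ᶠ t in 𝓝 a, DifferentiableAt ℝ f t)
    (hmax : IsLocalMax f a)
    (hd2 : DifferentiableAt ℝ (deriv f) a) :
    deriv (deriv f) a ≤ 0 := by
  by_contra hpos
  push_neg at hpos
  have h1 : deriv f a = 0 := hmax.deriv_eq_zero
  have hslope : Tendsto (slope (deriv f) a) (𝓝[≠] a) (𝓝 (deriv (deriv f) a)) := by
    have := hd2.hasDerivAt
    rwa [hasDerivAt_iff_tendsto_slope] at this
  have hev : ∀ᶠ t in 𝓝[>] a, 0 < deriv f t := by
    have h2 : ∀ᶠ t in 𝓝[>] a, 0 < slope (deriv f) a t := by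
      have := (hslope.mono_left (nhdsWithin_mono a (s := Ioi a) (by intro x hx; exact ne_of_gt hx))).eventually
        (eventually_gt_nhds hpos)
      simpa using this
    filter_upwards [h2, self_mem_nhdsWithin] with t ht hta
    have hta' : 0 < t - a := sub_pos.2 hta
    have h3 : 0 < (deriv f t - deriv f a) / (t - a) := by
      simpa [div_eq_inv_mul, slope, h1] using ht
    have := (div_pos_iff.mp h3).resolve_right (fun h => absurd h.2 (not_lt.2 hta'.le))
    linarith [this.1, h1]
  have hall : ∀ᶠ t in 𝓝[>] a, 0 < deriv f t ∧ DifferentiableAt ℝ f t ∧ f t ≤ f a := by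
    filter_upwards [hev, (hd.filter_mono nhdsWithin_le_nhds),
      (hmax.filter_mono nhdsWithin_le_nhds)] with t h1 h2 h3
    exact ⟨h1, h2, h3⟩
  rw [eventually_iff, mem_nhdsGT_iff_exists_Ioc_subset] at hall
  obtain ⟨b, hb, hIoc⟩ := hall
  have hab : a < b := hb
  have hda : DifferentiableAt ℝ f a := hd.self_of_nhds
  have hcont : ContinuousOn f (Icc a b) := by
    intro t ht
    rcases eq_or_lt_of_le ht.1 with rfl | hlt
    · exact hda.continuousAt.continuousWithinAt
    · exact ((hIoc ⟨hlt, ht.2⟩).2.1).continuousAt.continuousWithinAt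
  have hmono : StrictMonoOn f (Icc a b) := by
    apply strictMonoOn_of_deriv_pos (convex_Icc a b) hcont
    intro t ht
    rw [interior_Icc] at ht
    exact (hIoc ⟨ht.1, ht.2.le⟩).1
  have := hmono (left_mem_Icc.2 hab.le) (right_mem_Icc.2 hab.le) hab
  exact absurd this (not_lt.2 (hIoc ⟨hab, le_rfl⟩).2.2)

open Filter Set Topology in
private lemma line_lemma {g p D : ℝ → ℝ} {Λ ε : ℝ} {s : Set ℝ}
    (hg : ContDiffAt ℝ 2 g 0) (hs : IsOpen s) (hs0 : (0:ℝ) ∈ s)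
    (hp : ∀ t ∈ s, HasDerivAt p (D t) t) (hD : HasDerivAt D Λ 0)
    (hmax : IsLocalMax (fun t => g t - ε * p t) 0) :
    deriv (deriv g) 0 ≤ ε * Λ := by
  obtain ⟨u, hu_mem, hu⟩ := hg.contDiffOn le_rfl (by simp)
  set U : Set ℝ := interior u ∩ s with hU
  have hUopen : IsOpen U := isOpen_interior.inter hs
  have hU0 : (0:ℝ) ∈ U := ⟨mem_interior_iff_mem_nhds.2 hu_mem, hs0⟩
  have hUn : U ∈ 𝓝 (0:ℝ) := hUopen.mem_nhds hU0
  have hu' : ContDiffOn ℝ 2 g (interior u) := hu.mono interior_subset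
  have hgd : ∀ t ∈ U, DifferentiableAt ℝ g t := fun t ht =>
    (hu'.differentiableOn (by norm_num)).differentiableAt
      (isOpen_interior.mem_nhds ht.1)
  have hgderiv : ContDiffOn ℝ 1 (deriv g) (interior u) :=
    hu'.deriv_of_isOpen isOpen_interior (by norm_num)
  have hdg0 : DifferentiableAt ℝ (deriv g) 0 :=
    (hgderiv.differentiableOn one_ne_zero).differentiableAt
      (isOpen_interior.mem_nhds hU0.1)
  set h : ℝ → ℝ := fun t => g t - ε * p t with hh
  have hhd : ∀ t ∈ U, DifferentiableAt ℝ h t := fun t ht =>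
    (hgd t ht).sub (((hp t ht.2).differentiableAt).const_mul ε)
  have hderiv_eq : deriv h =ᶠ[𝓝 0] fun t => deriv g t - ε * D t := by
    filter_upwards [hUn] with t ht
    have : HasDerivAt h (deriv g t - ε * D t) t :=
      ((hgd t ht).hasDerivAt).sub ((hp t ht.2).const_mul ε)
    exact this.deriv
  have hrhsd : DifferentiableAt ℝ (fun t => deriv g t - ε * D t) 0 :=
    hdg0.sub (hD.differentiableAt.const_mul ε)
  have hd2 : DifferentiableAt ℝ (deriv h) 0 :=
    hderiv_eq.differentiableAt_iff.2 hrhsd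
  have hkey : deriv (deriv h) 0 ≤ 0 := by
    apply secondDeriv_nonpos_of_isLocalMax _ hmax hd2
    filter_upwards [hUn] with t ht
    exact hhd t ht
  have hval : deriv (deriv h) 0 = deriv (deriv g) 0 - ε * Λ := by
    rw [hderiv_eq.deriv_eq, deriv_fun_sub hdg0 (hD.differentiableAt.const_mul ε),
      deriv_const_mul _ hD.differentiableAt, hD.deriv]
  linarith [hkey, hval.symm.le, hval.le]

noncomputable def phiH (z : ℂ) : ℝ :=
  Real.log (z.re^2 + z.im^2 + 1) - Real.log (2*z.im)

private lemma sq_affine_deriv (x : ℝ) (c : ℝ) (t : ℝ) :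
    HasDerivAt (fun s : ℝ => (x+s)^2 + c) (2*(x+t)) t := by
  have h := (((hasDerivAt_id t).const_add x).pow 2).add_const c
  simp only [id_eq] at h
  refine h.congr_deriv ?_
  push_cast; ring

private lemma packX (x y : ℝ) (t : ℝ) :
    HasDerivAt (fun s => Real.log ((x+s)^2+y^2+1) - Real.log (2*y))
      (2*(x+t)/((x+t)^2+y^2+1)) t := by
  have h0 : HasDerivAt (fun s : ℝ => (x+s)^2+y^2+1) (2*(x+t)) t := by
    have h := sq_affine_deriv x (y^2+1) t
    convert h using 1
    funext s; ring
  have hne : ((x+t)^2+y^2+1 : ℝ) ≠ 0 := by positivity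
  exact (h0.log hne).sub_const (Real.log (2*y))

private lemma packX' (x y : ℝ) :
    HasDerivAt (fun t => 2*(x+t)/((x+t)^2+y^2+1))
      ((2*(x^2+y^2+1) - 4*x^2)/(x^2+y^2+1)^2) 0 := by
  have hnum : HasDerivAt (fun t : ℝ => 2*(x+t)) 2 0 := by
    have := ((hasDerivAt_id (0:ℝ)).const_add x).const_mul 2
    simpa using this
  have hden : HasDerivAt (fun t : ℝ => (x+t)^2+y^2+1) (2*(x+0)) 0 := by
    have h := sq_affine_deriv x (y^2+1) 0
    convert h using 1
    funext s; ring
  have hne : ((x+0)^2+y^2+1 : ℝ) ≠ 0 := by positivity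
  have h := hnum.div hden hne
  refine h.congr_deriv ?_
  norm_num
  ring

private lemma packY (x y : ℝ) (t : ℝ) (ht : 0 < y + t) :
    HasDerivAt (fun s => Real.log (x^2+(y+s)^2+1) - Real.log (2*(y+s)))
      (2*(y+t)/(x^2+(y+t)^2+1) - 2/(2*(y+t))) t := by
  have h0 : HasDerivAt (fun s : ℝ => x^2+(y+s)^2+1) (2*(y+t)) t := by
    have h := sq_affine_deriv y (x^2+1) t
    convert h using 1
    funext s; ring
  have hne : (x^2+(y+t)^2+1 : ℝ) ≠ 0 := by positivity
  have h1 : HasDerivAt (fun s : ℝ => 2*(y+s)) 2 t := by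
    have := ((hasDerivAt_id t).const_add y).const_mul 2
    simpa using this
  have hne2 : (2*(y+t) : ℝ) ≠ 0 := by positivity
  exact (h0.log hne).sub (h1.log hne2)

private lemma packY' (x y : ℝ) (hy : 0 < y) :
    HasDerivAt (fun t => 2*(y+t)/(x^2+(y+t)^2+1) - 2/(2*(y+t)))
      ((2*(x^2+y^2+1) - 4*y^2)/(x^2+y^2+1)^2 + 1/y^2) 0 := by
  have hnum : HasDerivAt (fun t : ℝ => 2*(y+t)) 2 0 := by
    have := ((hasDerivAt_id (0:ℝ)).const_add y).const_mul 2
    simpa using this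
  have hden : HasDerivAt (fun t : ℝ => x^2+(y+t)^2+1) (2*(y+0)) 0 := by
    have h := sq_affine_deriv y (x^2+1) 0
    convert h using 1
    funext s; ring
  have hne : (x^2+(y+0)^2+1 : ℝ) ≠ 0 := by positivity
  have hne2 : (2*(y+0) : ℝ) ≠ 0 := by simp; positivity
  have h := (hnum.div hden hne).sub ((hasDerivAt_const 0 (2:ℝ)).div hnum hne2)
  refine h.congr_deriv ?_
  have hy' : (y:ℝ) ≠ 0 := ne_of_gt hy
  field_simp
  ring

lemma UpperH_open : IsOpen UpperH := isOpen_lt continuous_const Complex.continuous_im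

lemma I_mem_UpperH : Complex.I ∈ UpperH := by simp [UpperH]

lemma phiH_nonneg {z : ℂ} (hz : z ∈ UpperH) : 0 ≤ phiH z := by
  have hy : 0 < z.im := hz
  have h1 : (0:ℝ) < 2*z.im := by linarith
  have h2 : 2*z.im ≤ z.re^2 + z.im^2 + 1 := by nlinarith [sq_nonneg (z.im - 1), sq_nonneg z.re]
  have := Real.log_le_log h1 h2
  simp only [phiH]; linarith

lemma iter2_eq (f : ℝ → ℝ) : iteratedDeriv 2 f = deriv (deriv f) := by
  rw [iteratedDeriv_succ, iteratedDeriv_one]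

private lemma lam_sum (x y : ℝ) (hy : 0 < y) :
    y^2 * ((2*(x^2+y^2+1) - 4*x^2)/(x^2+y^2+1)^2
      + ((2*(x^2+y^2+1) - 4*y^2)/(x^2+y^2+1)^2 + 1/y^2)) ≤ 2 := by
  have hu : (0:ℝ) < x^2+y^2+1 := by positivity
  have h2y : 2*y ≤ x^2+y^2+1 := by nlinarith [sq_nonneg (y-1), sq_nonneg x]
  have hy' : (y:ℝ) ≠ 0 := ne_of_gt hy
  have heq : y^2 * ((2*(x^2+y^2+1) - 4*x^2)/(x^2+y^2+1)^2
      + ((2*(x^2+y^2+1) - 4*y^2)/(x^2+y^2+1)^2 + 1/y^2))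
      = 4*y^2/(x^2+y^2+1)^2 + 1 := by
    field_simp
    ring
  rw [heq]
  have h : 4*y^2/(x^2+y^2+1)^2 ≤ 1 := by
    rw [div_le_one (by positivity)]
    nlinarith
  linarith

open Filter Set Topology in
lemma one_sided (m : ℝ) (hm : 0 < m)
    (c : ℂ → ℝ) (hc_low : ∀ z ∈ UpperH, m ≤ c z)
    (v : ℂ → ℝ) (hv : ContDiffOn ℝ 2 v UpperH)
    (M : ℝ) (hM : ∀ z ∈ UpperH, |v z| ≤ M)
    (W : ℝ) (hW : 0 ≤ W)
    (hw : ∀ z ∈ UpperH, -hypLaplacian v z + c z * v z ≤ W) :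
    ∀ z ∈ UpperH, v z ≤ W / m := by
  intro z₁ hz₁
  have hM0 : 0 ≤ M := le_trans (abs_nonneg _) (hM _ I_mem_UpperH)
  -- main step: for every ε > 0
  have key : ∀ ε : ℝ, 0 < ε → v z₁ ≤ W/m + ε * (2/m + phiH z₁) := by
    intro ε hε
    set K : ℝ := (2*M+1)/ε with hKdef
    have hK : 0 < K := by positivity
    set R : ℝ := Real.exp K with hRdef
    have hR1 : 1 ≤ R := Real.one_le_exp hK.le
    have hR0 : 0 < R := lt_of_lt_of_le one_pos hR1
    set C : Set ℂ := {z : ℂ | (2*R)⁻¹ ≤ z.im ∧ z.re^2+z.im^2+1 ≤ 2*R*z.im} with hCdef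
    have hCsub : C ⊆ UpperH := by
      intro z hz
      have h1 : (0:ℝ) < (2*R)⁻¹ := by positivity
      exact lt_of_lt_of_le h1 hz.1
    have hCclosed : IsClosed C := by
      have : C = {z : ℂ | (2*R)⁻¹ ≤ z.im} ∩ {z : ℂ | z.re^2+z.im^2+1 ≤ 2*R*z.im} := rfl
      rw [this]
      exact (isClosed_le continuous_const Complex.continuous_im).inter
        (isClosed_le (by fun_prop) (by fun_prop))
    have hCbdd : Bornology.IsBounded C := by
      rw [isBounded_iff_forall_norm_le]
      refine ⟨2*R + 2*R, fun z hz => ?_⟩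
      obtain ⟨h1, h2⟩ := hz
      have hy : 0 < z.im := lt_of_lt_of_le (by positivity) h1
      have hy2 : z.im ≤ 2*R := by nlinarith [sq_nonneg z.re]
      have hx2 : |z.re| ≤ 2*R := by
        rw [abs_le]
        constructor
        · nlinarith [sq_nonneg (z.re + 2*R)]
        · nlinarith [sq_nonneg (z.re - 2*R)]
      calc ‖z‖ ≤ |z.re| + |z.im| := Complex.norm_le_abs_re_add_abs_im z
        _ ≤ 2*R + 2*R := by
            have : |z.im| = z.im := abs_of_pos hy
            rw [this]; linarith
    have hCcomp : IsCompact C := Metric.isCompact_of_isClosed_isBounded hCclosed hCbdd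
    have hiC : Complex.I ∈ C := by
      constructor
      · simp only [Complex.I_im]
        rw [inv_le_one_iff₀]; right; linarith
      · simp only [Complex.I_re, Complex.I_im]; nlinarith
    set ψ : ℂ → ℝ := fun z => v z - ε * phiH z with hψdef
    have hφcont : ContinuousOn phiH C := by
      apply ContinuousOn.sub
      · apply ContinuousOn.log (by fun_prop)
        intro z hz; have := hCsub hz; positivity
      · apply ContinuousOn.log (by fun_prop)
        intro z hz
        have hy : (0:ℝ) < z.im := hCsub hz
        positivity
    have hψcont : ContinuousOn ψ C :=
      ((hv.continuousOn).mono hCsub).sub (continuousOn_const.mul hφcont)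
    obtain ⟨z₀, hz₀C, hz₀max⟩ := hCcomp.exists_isMaxOn ⟨Complex.I, hiC⟩ hψcont
    have hz₀ : z₀ ∈ UpperH := hCsub hz₀C
    have hsub_level : ∀ z ∈ UpperH, phiH z ≤ K → z ∈ C := by
      intro z hz hφ
      have hy : (0:ℝ) < z.im := hz
      have h2y : (0:ℝ) < 2*z.im := by linarith
      have hlog : Real.log (z.re^2+z.im^2+1) ≤ K + Real.log (2*z.im) := by
        have : phiH z = Real.log (z.re^2+z.im^2+1) - Real.log (2*z.im) := rfl
        linarith [hφ, this]
      have hq : z.re^2+z.im^2+1 ≤ R*(2*z.im) := by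
        have h := (Real.log_le_iff_le_exp (by positivity)).1 hlog
        rwa [Real.exp_add, Real.exp_log h2y] at h
      constructor
      · rw [inv_eq_one_div, div_le_iff₀ (by positivity)]
        nlinarith [sq_nonneg z.re, sq_nonneg z.im]
      · nlinarith
    have hφI : phiH Complex.I = 0 := by
      simp only [phiH, Complex.I_re, Complex.I_im]
      norm_num
    have hglobal : ∀ z ∈ UpperH, ψ z ≤ ψ z₀ := by
      intro z hz
      by_cases hzC : z ∈ C
      · exact hz₀max hzC
      · have hφK : K < phiH z := by
          by_contra hcon
          exact hzC (hsub_level z hz (not_lt.1 hcon))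
        have hεK : ε * K = 2*M+1 := by
          rw [hKdef]; field_simp
        have h1 : ψ z ≤ M - (2*M+1) := by
          have hvz := (abs_le.1 (hM z hz)).2
          have := mul_le_mul_of_nonneg_left hφK.le hε.le
          simp only [hψdef]
          linarith
        have h2 : ψ Complex.I ≤ ψ z₀ := hz₀max hiC
        have h3 : -M ≤ v Complex.I := (abs_le.1 (hM _ I_mem_UpperH)).1
        have h4 : ψ Complex.I = v Complex.I := by
          simp only [hψdef, hφI]; ring
        linarith
    -- second derivative analysis at z₀
    set x : ℝ := z₀.re with hxdef
    set y : ℝ := z₀.im with hydef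
    have hy : 0 < y := hz₀
    have hlineX : ContDiff ℝ 2 (fun t : ℝ => z₀ + (t:ℂ)) :=
      contDiff_const.add Complex.ofRealCLM.contDiff
    have hlineY : ContDiff ℝ 2 (fun t : ℝ => z₀ + (t:ℂ) * Complex.I) :=
      contDiff_const.add (Complex.ofRealCLM.contDiff.mul contDiff_const)
    set gx : ℝ → ℝ := fun t => v (z₀ + (t:ℂ)) with hgxdef
    set gy : ℝ → ℝ := fun t => v (z₀ + (t:ℂ) * Complex.I) with hgydef
    have hmemX : ∀ t : ℝ, z₀ + (t:ℂ) ∈ UpperH := by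
      intro t
      show (0:ℝ) < (z₀ + (t:ℂ)).im
      simpa [Complex.add_im] using hy
    have hmemY : ∀ t : ℝ, 0 < y + t → z₀ + (t:ℂ) * Complex.I ∈ UpperH := by
      intro t ht
      show (0:ℝ) < (z₀ + (t:ℂ) * Complex.I).im
      simpa using ht
    have hgx : ContDiffAt ℝ 2 gx 0 := by
      have h1 : ContDiffAt ℝ 2 v (z₀ + ((0:ℝ):ℂ)) :=
        hv.contDiffAt (UpperH_open.mem_nhds (hmemX 0))
      have h2 := h1.comp (0:ℝ) hlineX.contDiffAt
      exact h2
    have hgy : ContDiffAt ℝ 2 gy 0 := by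
      have h1 : ContDiffAt ℝ 2 v (z₀ + ((0:ℝ):ℂ) * Complex.I) :=
        hv.contDiffAt (UpperH_open.mem_nhds (hmemY 0 (by simpa using hy)))
      have h2 := h1.comp (0:ℝ) hlineY.contDiffAt
      exact h2
    set px : ℝ → ℝ := fun t => phiH (z₀ + (t:ℂ)) with hpxdef
    set py : ℝ → ℝ := fun t => phiH (z₀ + (t:ℂ) * Complex.I) with hpydef
    have hpx_eq : px = fun t => Real.log ((x+t)^2+y^2+1) - Real.log (2*y) := by
      funext t
      simp only [hpxdef, phiH, Complex.add_re, Complex.add_im, Complex.ofReal_re,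
        Complex.ofReal_im, add_zero]
      rfl
    have hpy_eq : py = fun t => Real.log (x^2+(y+t)^2+1) - Real.log (2*(y+t)) := by
      funext t
      simp only [hpydef, phiH, Complex.add_re, Complex.add_im, Complex.mul_re,
        Complex.mul_im, Complex.ofReal_re, Complex.ofReal_im, Complex.I_re,
        Complex.I_im, mul_zero, mul_one, zero_mul, sub_zero, add_zero, zero_add]
      rfl
    set Λx : ℝ := (2*(x^2+y^2+1) - 4*x^2)/(x^2+y^2+1)^2 with hΛx
    set Λy : ℝ := (2*(x^2+y^2+1) - 4*y^2)/(x^2+y^2+1)^2 + 1/y^2 with hΛy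
    have hψz₀ : ψ z₀ = gx 0 - ε * px 0 := by
      simp only [hgxdef, hpxdef, Complex.ofReal_zero, add_zero]
      rfl
    have hψz₀' : ψ z₀ = gy 0 - ε * py 0 := by
      simp only [hgydef, hpydef, Complex.ofReal_zero, zero_mul, add_zero]
      rfl
    have hmaxX : IsLocalMax (fun t => gx t - ε * px t) 0 := by
      apply Filter.Eventually.of_forall
      intro t
      have := hglobal _ (hmemX t)
      rw [hψz₀] at this
      exact this
    have hmaxY : IsLocalMax (fun t => gy t - ε * py t) 0 := by
      have hs : {t : ℝ | 0 < y + t} ∈ 𝓝 (0:ℝ) := by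
        apply IsOpen.mem_nhds
        · exact isOpen_lt continuous_const (continuous_const.add continuous_id)
        · simpa using hy
      filter_upwards [hs] with t ht
      have := hglobal _ (hmemY t ht)
      rw [hψz₀'] at this
      exact this
    have hx2 : deriv (deriv gx) 0 ≤ ε * Λx := by
      apply line_lemma hgx isOpen_univ (mem_univ _) _ (packX' x y) hmaxX
      intro t _
      rw [hpx_eq]
      exact packX x y t
    have hy2 : deriv (deriv gy) 0 ≤ ε * Λy := by
      apply line_lemma hgy (isOpen_lt continuous_const (continuous_const.add continuous_id))
        (by simpa using hy) _ (packY' x y hy) hmaxY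
      intro t ht
      rw [hpy_eq]
      exact packY x y t ht
    -- Laplacian bound
    have hΛsum : y^2 * (Λx + Λy) ≤ 2 := by
      rw [hΛx, hΛy]
      exact lam_sum x y hy
    have hlap : hypLaplacian v z₀ ≤ 2 * ε := by
      have h1 : hypLaplacian v z₀ = y^2 * (iteratedDeriv 2 gx 0 + iteratedDeriv 2 gy 0) := rfl
      rw [h1, iter2_eq gx, iter2_eq gy]
      calc y^2 * (deriv (deriv gx) 0 + deriv (deriv gy) 0)
          ≤ y^2 * (ε * Λx + ε * Λy) := by
            apply mul_le_mul_of_nonneg_left (by linarith) (sq_nonneg y)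
        _ = ε * (y^2 * (Λx + Λy)) := by ring
        _ ≤ ε * 2 := mul_le_mul_of_nonneg_left hΛsum hε.le
        _ = 2 * ε := by ring
    -- conclude v z₀ ≤ (W + 2ε)/m
    have hvz₀ : v z₀ ≤ (W + 2*ε)/m := by
      have hwz := hw z₀ hz₀
      have hcv : c z₀ * v z₀ ≤ W + 2*ε := by linarith
      rcases le_or_gt (v z₀) 0 with h | h
      · exact le_trans h (by positivity)
      · have h1 : m * v z₀ ≤ c z₀ * v z₀ :=
          mul_le_mul_of_nonneg_right (hc_low z₀ hz₀) h.le
        rw [le_div_iff₀ hm]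
        linarith
    -- final chain
    have hchain := hglobal z₁ hz₁
    have hφz₀ : 0 ≤ phiH z₀ := phiH_nonneg hz₀
    have hdiv : (W + 2*ε)/m = W/m + ε * (2/m) := by ring
    have hψz₀v : ψ z₀ ≤ v z₀ := by
      have hmul := mul_nonneg hε.le hφz₀
      simp only [hψdef]
      linarith
    have : v z₁ - ε * phiH z₁ ≤ v z₀ := le_trans hchain hψz₀v
    have hfinal := le_trans this hvz₀
    rw [hdiv] at hfinal
    have hexp : ε*(2/m + phiH z₁) = ε*(2/m) + ε*phiH z₁ := by ring
    linarith
  -- take ε → 0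
  set Cst : ℝ := 2/m + phiH z₁ with hCst
  have hCst0 : 0 < Cst := by
    have := phiH_nonneg hz₁
    have : (0:ℝ) < 2/m := by positivity
    simp only [hCst]
    linarith [phiH_nonneg hz₁]
  refine le_of_forall_pos_le_add fun δ hδ => ?_
  have h := key (δ/Cst) (by positivity)
  calc v z₁ ≤ W/m + (δ/Cst) * Cst := h
    _ = W/m + δ := by rw [div_mul_cancel₀ _ (ne_of_gt hCst0)]

lemma hypLaplacian_neg (v : ℂ → ℝ) (z : ℂ) :
    hypLaplacian (fun w => -v w) z = -hypLaplacian v z := by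
  unfold hypLaplacian
  rw [iteratedDeriv_fun_neg, iteratedDeriv_fun_neg]
  ring

/-- A priori sup-norm estimate for the linearized operator `L v = −Δ_ℍ v + c·v`:
`sup |v| ≤ m⁻¹ sup |Lv|`. -/
theorem linearized_sup_estimate
    (m : ℝ) (hm : 0 < m)
    (c : ℂ → ℝ) (hc_cont : ContinuousOn c UpperH)
    (hc_low : ∀ z ∈ UpperH, m ≤ c z)
    (v : ℂ → ℝ)
    (hv_smooth : ContDiffOn ℝ 2 v UpperH)
    (hv_bdd : ∃ M : ℝ, ∀ z ∈ UpperH, |v z| ≤ M)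
    (hw_bdd : ∃ M : ℝ, ∀ z ∈ UpperH, |-hypLaplacian v z + c z * v z| ≤ M) :
    sSup ((fun z => |v z|) '' UpperH) ≤
      m⁻¹ * sSup ((fun z => |-hypLaplacian v z + c z * v z|) '' UpperH) := by
  obtain ⟨M, hM⟩ := hv_bdd
  obtain ⟨M₂, hM₂⟩ := hw_bdd
  set W : ℝ := sSup ((fun z => |-hypLaplacian v z + c z * v z|) '' UpperH) with hWdef
  have hbdd : BddAbove ((fun z => |-hypLaplacian v z + c z * v z|) '' UpperH) := by
    refine ⟨M₂, fun a ha => ?_⟩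
    obtain ⟨z, hz, rfl⟩ := ha
    exact hM₂ z hz
  have hWmem : ∀ z ∈ UpperH, |-hypLaplacian v z + c z * v z| ≤ W := fun z hz =>
    le_csSup hbdd ⟨z, hz, rfl⟩
  have hW0 : 0 ≤ W := le_trans (abs_nonneg _) (hWmem _ I_mem_UpperH)
  have hpos : ∀ z ∈ UpperH, v z ≤ W / m := by
    apply one_sided m hm c hc_low v hv_smooth M hM W hW0
    intro z hz
    exact le_trans (le_abs_self _) (hWmem z hz)
  have hneg : ∀ z ∈ UpperH, -v z ≤ W / m := by
    apply one_sided m hm c hc_low (fun w => -v w) hv_smooth.neg M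
      (fun z hz => by rw [abs_neg]; exact hM z hz) W hW0
    intro z hz
    have h1 : -hypLaplacian (fun w => -v w) z + c z * -v z
        = -(-hypLaplacian v z + c z * v z) := by
      rw [hypLaplacian_neg]; ring
    rw [h1]
    exact le_trans (neg_le_abs _) (hWmem z hz)
  apply csSup_le
  · exact ⟨|v Complex.I|, Complex.I, I_mem_UpperH, rfl⟩
  · intro b hb
    obtain ⟨z, hz, rfl⟩ := hb
    rw [abs_le]
    have heq : m⁻¹ * W = W / m := (div_eq_inv_mul W m).symm
    constructor
    · rw [heq]; linarith [hneg z hz]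
    · rw [heq]; exact hpos z hz
end

section
/- Let m > 0 and let c : ℍ → ℝ be a continuous function with c(z) ≥ m for all z ∈ ℍ. If v : ℍ → ℝ is a bounded C² function satisfying −Δ_ℍ v + c·v = 0 on ℍ, then v = 0. In other words, the linear operator L v = −Δ_ℍ v + c·v is injective on bounded C² functions. -/
open Filter Topology Set

section AuxLemmas

/-! ### Generic calculus lemmas -/

lemma contDiffAt_two_deriv {f : ℝ → ℝ} {x : ℝ} (hf : ContDiffAt ℝ 2 f x) :
    DifferentiableAt ℝ (deriv f) x ∧ ∀ᶠ y in 𝓝 x, DifferentiableAt ℝ f y := by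
  obtain ⟨u, hu, hfu⟩ := hf.contDiffOn le_rfl (by simp)
  obtain ⟨t, htu, ht, hxt⟩ := mem_nhds_iff.mp hu
  have hft : ContDiffOn ℝ 2 f t := hfu.mono htu
  have hdt : ContDiffOn ℝ 1 (deriv f) t := hft.deriv_of_isOpen ht (by norm_num)
  constructor
  · exact ((hdt.differentiableOn (by norm_num)).differentiableAt (ht.mem_nhds hxt))
  · filter_upwards [ht.mem_nhds hxt] with y hy
    exact (hft.differentiableOn (by norm_num)).differentiableAt (ht.mem_nhds hy)

lemma iteratedDeriv_two_eq (F : ℝ → ℝ) (x : ℝ) :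
    iteratedDeriv 2 F x = deriv (deriv F) x := by
  rw [show (2:ℕ) = 1 + 1 from rfl, iteratedDeriv_succ, iteratedDeriv_one]

lemma iteratedDeriv_two_nonpos_of_isLocalMax {f : ℝ → ℝ} (hf : ContDiffAt ℝ 2 f 0)
    (hmax : IsLocalMax f 0) : iteratedDeriv 2 f 0 ≤ 0 := by
  by_contra hL
  push_neg at hL
  rw [iteratedDeriv_two_eq] at hL
  have hg0 : deriv f 0 = 0 := hmax.deriv_eq_zero
  obtain ⟨hgd, hfd⟩ := contDiffAt_two_deriv hf
  have hslope : Tendsto (slope (deriv f) 0) (𝓝[≠] 0) (𝓝 (deriv (deriv f) 0)) :=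
    hasDerivAt_iff_tendsto_slope.1 hgd.hasDerivAt
  have hpos : ∀ᶠ s in 𝓝[>] (0:ℝ), 0 < deriv f s := by
    have h1 : ∀ᶠ s in 𝓝[>] (0:ℝ), 0 < slope (deriv f) 0 s :=
      (hslope.mono_left (nhdsWithin_mono 0 (fun s hs => ne_of_gt hs))).eventually
        (lt_mem_nhds hL)
    filter_upwards [h1, self_mem_nhdsWithin] with s hs hs'
    have heq : slope (deriv f) 0 s = s⁻¹ * deriv f s := by
      simp [slope, hg0]
    rw [heq] at hs
    have hs'' : (0:ℝ) < s := hs'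
    have h3 : 0 < s * (s⁻¹ * deriv f s) := mul_pos hs'' hs
    rwa [← mul_assoc, mul_inv_cancel₀ (ne_of_gt hs''), one_mul] at h3
  obtain ⟨δ, hδ0, hδ⟩ := (nhdsGT_basis (0:ℝ)).eventually_iff.mp hpos
  obtain ⟨r, hr0, hr⟩ := Metric.eventually_nhds_iff_ball.mp (hmax.and hfd)
  set d := min δ r / 2 with hd
  have hd0 : 0 < d := by positivity
  have hdr : d < r := by
    have := min_le_right δ r; simp only [hd]; linarith
  have hdδ : d < δ := by
    have := min_le_left δ r; simp only [hd]; linarith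
  have hcont : ContinuousOn f (Icc 0 d) := by
    intro s hs
    have hsr : s ∈ Metric.ball (0:ℝ) r := by
      simp only [Metric.mem_ball, Real.dist_eq, abs_sub_comm, sub_zero]
      rw [abs_of_nonneg hs.1]
      exact lt_of_le_of_lt hs.2 hdr
    exact ((hr s hsr).2.continuousAt).continuousWithinAt
  have hmono : StrictMonoOn f (Icc 0 d) := by
    apply strictMonoOn_of_deriv_pos (convex_Icc 0 d) hcont
    intro s hs
    rw [interior_Icc] at hs
    exact hδ ⟨hs.1, lt_trans hs.2 hdδ⟩
  have h1 : f 0 < f d := hmono (left_mem_Icc.2 hd0.le) (right_mem_Icc.2 hd0.le) hd0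
  have h2' : f d ≤ f 0 := by
    have : d ∈ Metric.ball (0:ℝ) r := by
      simp [Real.dist_eq, abs_of_nonneg hd0.le, hdr]
    exact (hr d this).1
  linarith

lemma iteratedDeriv_two_sub_const_mul {f g : ℝ → ℝ} {x : ℝ} (hf : ContDiffAt ℝ 2 f x)
    (hg : ContDiffAt ℝ 2 g x) (ε : ℝ) :
    iteratedDeriv 2 (fun t => f t - ε * g t) x
      = iteratedDeriv 2 f x - ε * iteratedDeriv 2 g x := by
  have hfd := (contDiffAt_two_deriv hf).2
  have hgd := (contDiffAt_two_deriv hg).2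
  have h1 : deriv (fun t => f t - ε * g t) =ᶠ[𝓝 x] fun t => deriv f t - ε * deriv g t := by
    filter_upwards [hfd, hgd] with y hfy hgy
    rw [deriv_fun_sub hfy (hgy.const_mul ε), deriv_const_mul ε hgy]
  have h2 : iteratedDeriv 2 (fun t => f t - ε * g t) x
      = deriv (fun t => deriv f t - ε * deriv g t) x := by
    rw [iteratedDeriv_two_eq]
    exact h1.deriv_eq
  rw [h2, deriv_fun_sub (contDiffAt_two_deriv hf).1 ((contDiffAt_two_deriv hg).1.const_mul ε),
    deriv_const_mul ε (contDiffAt_two_deriv hg).1, iteratedDeriv_two_eq,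
    iteratedDeriv_two_eq g]

lemma iteratedDeriv_two_add_const (F : ℝ → ℝ) (c x : ℝ) :
    iteratedDeriv 2 (fun t => F t + c) x = iteratedDeriv 2 F x := by
  have h : deriv (fun t => F t + c) = deriv F := funext fun t => deriv_add_const c
  rw [iteratedDeriv_two_eq, iteratedDeriv_two_eq, h]

/-! ### The model one-variable functions -/

lemma hasDerivAt_logquad (a b t : ℝ) :
    HasDerivAt (fun t : ℝ => Real.log ((a + t)^2 + b^2 + 1))
      (2*(a + t) / ((a + t)^2 + b^2 + 1)) t := by
  have hq : HasDerivAt (fun t : ℝ => (a + t)^2 + b^2 + 1) (2*(a + t)) t := by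
    have h1 : HasDerivAt (fun t : ℝ => a + t) 1 t := (hasDerivAt_id t).const_add a
    have h2 := (h1.fun_pow 2).add_const (b^2 + 1)
    convert h2 using 1
    · rfl
    · rfl
    · funext s; ring
    · norm_num
  exact hq.log (by positivity)

lemma contDiffAt_logquad (a b x : ℝ) :
    ContDiffAt ℝ 2 (fun t : ℝ => Real.log ((a + t)^2 + b^2 + 1)) x := by
  have h : ContDiff ℝ 2 (fun t : ℝ => (a + t)^2 + b^2 + 1) := by fun_prop
  exact h.contDiffAt.log (by positivity)

lemma iteratedDeriv_two_logquad (a b : ℝ) :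
    iteratedDeriv 2 (fun t : ℝ => Real.log ((a + t)^2 + b^2 + 1)) 0
      = (2*(a^2 + b^2 + 1) - 4*a^2) / (a^2 + b^2 + 1)^2 := by
  have hA : (0:ℝ) < a^2 + b^2 + 1 := by positivity
  have hder : deriv (fun t : ℝ => Real.log ((a + t)^2 + b^2 + 1))
      = fun t => 2*(a + t) / ((a + t)^2 + b^2 + 1) :=
    funext fun t => (hasDerivAt_logquad a b t).deriv
  rw [iteratedDeriv_two_eq, hder]
  have hN : HasDerivAt (fun t : ℝ => 2*(a + t)) 2 0 := by
    simpa using ((hasDerivAt_id (0:ℝ)).const_add a).const_mul 2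
  have hD : HasDerivAt (fun t : ℝ => (a + t)^2 + b^2 + 1) (2*(a + 0)) 0 := by
    have h1 : HasDerivAt (fun t : ℝ => a + t) 1 0 := (hasDerivAt_id 0).const_add a
    have h2 := (h1.fun_pow 2).add_const (b^2 + 1)
    convert h2 using 1
    · rfl
    · rfl
    · funext s; ring
    · norm_num
  have hd0 : ((a:ℝ) + 0)^2 + b^2 + 1 ≠ 0 := by positivity
  have := (hN.fun_div hD hd0).deriv
  rw [this]
  field_simp
  ring

lemma iteratedDeriv_two_modelY (y b c : ℝ) (hy : 0 < y) :
    iteratedDeriv 2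
      (fun t : ℝ => Real.log ((y + t)^2 + b^2 + 1) - Real.log (2*(y + t)) + c) 0
      = (2*(y^2 + b^2 + 1) - 4*y^2)/(y^2 + b^2 + 1)^2 + 1/y^2 := by
  have hA : (0:ℝ) < y^2 + b^2 + 1 := by positivity
  have hlin : ∀ t : ℝ, HasDerivAt (fun t : ℝ => 2*(y + t)) 2 t := by
    intro t
    simpa using ((hasDerivAt_id t).const_add y).const_mul 2
  have hder : deriv (fun t : ℝ => Real.log ((y + t)^2 + b^2 + 1) - Real.log (2*(y + t)) + c)
      =ᶠ[𝓝 (0:ℝ)] fun t => 2*(y + t)/((y + t)^2 + b^2 + 1) - 2/(2*(y + t)) := by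
    filter_upwards [Ioi_mem_nhds (neg_lt_zero.2 hy)] with t ht
    have h1 : 0 < y + t := by simp only [mem_Ioi] at ht; linarith
    have hlog2 : HasDerivAt (fun t : ℝ => Real.log (2*(y + t))) (2/(2*(y + t))) t :=
      (hlin t).log (by positivity)
    exact (((hasDerivAt_logquad y b t).sub hlog2).add_const c).deriv
  rw [iteratedDeriv_two_eq, hder.deriv_eq]
  have hN : HasDerivAt (fun t : ℝ => 2*(y + t)) 2 0 := hlin 0
  have hD : HasDerivAt (fun t : ℝ => (y + t)^2 + b^2 + 1) (2*(y + 0)) 0 := by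
    have h1 : HasDerivAt (fun t : ℝ => y + t) 1 0 := (hasDerivAt_id 0).const_add y
    have h2 := (h1.fun_pow 2).add_const (b^2 + 1)
    convert h2 using 1
    · rfl
    · rfl
    · funext s; ring
    · norm_num
  have hd0 : ((y:ℝ) + 0)^2 + b^2 + 1 ≠ 0 := by positivity
  have hy0 : (2:ℝ)*(y + 0) ≠ 0 := by simpa using (by positivity : (0:ℝ) < 2*y).ne'
  have hpart1 := hN.fun_div hD hd0
  have hpart2 := (hasDerivAt_const (0:ℝ) (2:ℝ)).fun_div hN hy0
  have := (hpart1.fun_sub hpart2).deriv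
  rw [this]
  have hyne : y ≠ 0 := hy.ne'
  field_simp
  ring

/-! ### The barrier function -/

noncomputable def auxPhi0 : ℂ → ℝ := fun z => (z.re^2 + z.im^2 + 1) / (2*z.im)

noncomputable def auxPhi (m : ℝ) : ℂ → ℝ := fun z => Real.log (auxPhi0 z) + 2/m

lemma auxPhi0_ge_one {z : ℂ} (hz : 0 < z.im) : 1 ≤ auxPhi0 z := by
  rw [auxPhi0, le_div_iff₀ (by positivity)]
  nlinarith [sq_nonneg (z.im - 1), sq_nonneg z.re]

lemma auxPhi_ge (m : ℝ) {z : ℂ} (hz : 0 < z.im) : 2/m ≤ auxPhi m z := by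
  have := Real.log_nonneg (auxPhi0_ge_one hz)
  simp only [auxPhi]; linarith

lemma auxPhi0_I : auxPhi0 Complex.I = 1 := by
  simp [auxPhi0, Complex.I_re, Complex.I_im]

lemma auxPhi_lineX (m : ℝ) (z : ℂ) (hz : 0 < z.im) :
    (fun t : ℝ => auxPhi m (z + (t:ℂ))) =
      fun t => Real.log ((z.re + t)^2 + z.im^2 + 1) + (2/m - Real.log (2*z.im)) := by
  funext t
  simp only [auxPhi, auxPhi0, Complex.add_re, Complex.add_im, Complex.ofReal_re,
    Complex.ofReal_im, add_zero]
  rw [Real.log_div (by positivity) (by positivity)]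
  ring

lemma auxPhi_lineY (m : ℝ) (z : ℂ) (hz : 0 < z.im) :
    (fun t : ℝ => auxPhi m (z + (t:ℂ) * Complex.I)) =ᶠ[𝓝 (0:ℝ)]
      fun t => Real.log ((z.im + t)^2 + z.re^2 + 1) - Real.log (2*(z.im + t)) + 2/m := by
  filter_upwards [Ioi_mem_nhds (neg_lt_zero.2 hz)] with t ht
  have h1 : 0 < z.im + t := by simp only [mem_Ioi] at ht; linarith
  simp only [auxPhi, auxPhi0, Complex.add_re, Complex.add_im, Complex.mul_I_re,
    Complex.mul_I_im, Complex.ofReal_re, Complex.ofReal_im, neg_zero, add_zero]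
  rw [Real.log_div (by positivity) (by positivity)]
  rw [show z.re^2 + (z.im + t)^2 + 1 = (z.im + t)^2 + z.re^2 + 1 by ring]

lemma auxPhi_contDiffAt_lineX (m : ℝ) (z : ℂ) (hz : 0 < z.im) :
    ContDiffAt ℝ 2 (fun t : ℝ => auxPhi m (z + (t:ℂ))) 0 := by
  rw [auxPhi_lineX m z hz]
  exact (contDiffAt_logquad z.re z.im 0).add contDiffAt_const

lemma auxPhi_contDiffAt_lineY (m : ℝ) (z : ℂ) (hz : 0 < z.im) :
    ContDiffAt ℝ 2 (fun t : ℝ => auxPhi m (z + (t:ℂ) * Complex.I)) 0 := by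
  have hmodel : ContDiffAt ℝ 2
      (fun t : ℝ => Real.log ((z.im + t)^2 + z.re^2 + 1) - Real.log (2*(z.im + t)) + 2/m) 0 := by
    have hlog2 : ContDiffAt ℝ 2 (fun t : ℝ => Real.log (2*(z.im + t))) 0 := by
      have h : ContDiff ℝ 2 (fun t : ℝ => 2*(z.im + t)) := by fun_prop
      exact h.contDiffAt.log (by simp; linarith)
    exact ((contDiffAt_logquad z.im z.re 0).sub hlog2).add contDiffAt_const
  exact hmodel.congr_of_eventuallyEq (auxPhi_lineY m z hz)

lemma auxPhi_iterX (m : ℝ) (z : ℂ) (hz : 0 < z.im) :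
    iteratedDeriv 2 (fun t : ℝ => auxPhi m (z + (t:ℂ))) 0
      = (2*(z.re^2 + z.im^2 + 1) - 4*z.re^2)/(z.re^2 + z.im^2 + 1)^2 := by
  rw [auxPhi_lineX m z hz, iteratedDeriv_two_add_const, iteratedDeriv_two_logquad]

lemma auxPhi_iterY (m : ℝ) (z : ℂ) (hz : 0 < z.im) :
    iteratedDeriv 2 (fun t : ℝ => auxPhi m (z + (t:ℂ) * Complex.I)) 0
      = (2*(z.im^2 + z.re^2 + 1) - 4*z.im^2)/(z.im^2 + z.re^2 + 1)^2 + 1/z.im^2 := by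
  rw [(auxPhi_lineY m z hz).iteratedDeriv_eq 2, iteratedDeriv_two_modelY z.im z.re _ hz]

lemma mem_ball_iff_quad (R : ℝ) (hR : 1 ≤ R) (z : ℂ) :
    z ∈ Metric.closedBall ((R:ℂ)*Complex.I) (Real.sqrt (R^2 - 1)) ↔
      z.re^2 + (z.im - R)^2 ≤ R^2 - 1 := by
  rw [Metric.mem_closedBall, Complex.dist_eq,
    Real.le_sqrt (norm_nonneg _) (by nlinarith), Complex.sq_norm,
    Complex.normSq_apply]
  simp only [Complex.sub_re, Complex.sub_im, Complex.mul_I_re, Complex.mul_I_im,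
    Complex.ofReal_re, Complex.ofReal_im, neg_zero, sub_zero]
  constructor <;> intro h <;> nlinarith [h]

end AuxLemmas

section Main

lemma hypLaplacian_auxPhi_le (m : ℝ) (z : ℂ) (hz : 0 < z.im) :
    hypLaplacian (auxPhi m) z ≤ 2 := by
  rw [hypLaplacian, auxPhi_iterX m z hz, auxPhi_iterY m z hz]
  set x := z.re
  set y := z.im
  have hA : (0:ℝ) < x^2 + y^2 + 1 := by positivity
  have heq : y^2 * ((2*(x^2 + y^2 + 1) - 4*x^2)/(x^2 + y^2 + 1)^2 +
      ((2*(y^2 + x^2 + 1) - 4*y^2)/(y^2 + x^2 + 1)^2 + 1/y^2))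
      = 4*y^2/(x^2 + y^2 + 1)^2 + 1 := by
    rw [show y^2 + x^2 + 1 = x^2 + y^2 + 1 by ring]
    field_simp
    ring
  rw [heq]
  have h4 : 4*y^2 ≤ (x^2 + y^2 + 1)^2 := by
    nlinarith [sq_nonneg (y^2 - 1), sq_nonneg x, sq_nonneg (x*y)]
  have h5 : 4*y^2/(x^2 + y^2 + 1)^2 ≤ 1 :=
    (div_le_one (by positivity : (0:ℝ) < (x^2 + y^2 + 1)^2)).2 h4
  linarith

lemma auxPhi_continuousOn (m : ℝ) : ContinuousOn (auxPhi m) UpperH := by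
  have h0 : ContinuousOn auxPhi0 UpperH := by
    apply ContinuousOn.div
    · fun_prop
    · fun_prop
    · intro z hz
      have hz' : 0 < z.im := hz
      positivity
  have h1 : ContinuousOn (fun z => Real.log (auxPhi0 z)) UpperH :=
    h0.log (fun z hz => by
      have := auxPhi0_ge_one (show 0 < z.im from hz); linarith)
  exact h1.add continuousOn_const

lemma key_nonpos (m : ℝ) (hm : 0 < m) (c : ℂ → ℝ)
    (hc_low : ∀ z ∈ UpperH, m ≤ c z) (v : ℂ → ℝ)
    (hv_smooth : ContDiffOn ℝ 2 v UpperH)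
    (M : ℝ) (hM : ∀ z ∈ UpperH, |v z| ≤ M)
    (hv_eq : ∀ z ∈ UpperH, -hypLaplacian v z + c z * v z = 0) :
    ∀ z ∈ UpperH, v z ≤ 0 := by
  have hopen : IsOpen UpperH := isOpen_lt continuous_const Complex.continuous_im
  have hIH : Complex.I ∈ UpperH := by simp [UpperH]
  have hM0 : 0 ≤ M := le_trans (abs_nonneg _) (hM Complex.I hIH)
  intro z₁ hz₁
  have hphipos : ∀ z ∈ UpperH, 0 < auxPhi m z := fun z hz =>
    lt_of_lt_of_le (by positivity) (auxPhi_ge m (show 0 < z.im from hz))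
  suffices h : ∀ ε : ℝ, 0 < ε → v z₁ ≤ ε * auxPhi m z₁ by
    by_contra hv1
    push_neg at hv1
    have hp := hphipos z₁ hz₁
    have h2 := h (v z₁ / (2 * auxPhi m z₁)) (by positivity)
    have heq : v z₁ / (2 * auxPhi m z₁) * auxPhi m z₁ = v z₁ / 2 := by
      field_simp
    rw [heq] at h2
    linarith
  intro ε hε
  set φ := auxPhi m with hφ
  set w : ℂ → ℝ := fun z => v z - ε * φ z with hw
  set R : ℝ := Real.exp (2*M/ε) + 1 with hR
  have hexp := Real.exp_pos (2*M/ε)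
  have hR1 : 1 ≤ R := by simp only [hR]; linarith
  set K := Metric.closedBall ((R:ℂ)*Complex.I) (Real.sqrt (R^2 - 1)) with hK
  have hmemK : ∀ z : ℂ, z ∈ K ↔ z.re^2 + (z.im - R)^2 ≤ R^2 - 1 := mem_ball_iff_quad R hR1
  have hKUpper : K ⊆ UpperH := by
    intro z hzK
    rw [hmemK] at hzK
    simp only [UpperH, Set.mem_setOf_eq]
    by_contra hy
    push_neg at hy
    nlinarith [sq_nonneg z.re]
  have hIK : Complex.I ∈ K := by
    rw [hmemK]
    simp only [Complex.I_re, Complex.I_im]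
    nlinarith
  have hφle : ∀ z ∈ UpperH, auxPhi0 z ≤ R → z ∈ K := by
    intro z hz hle
    rw [hmemK]
    have hz' : 0 < z.im := hz
    rw [auxPhi0, div_le_iff₀ (by positivity)] at hle
    nlinarith
  have hwcont : ContinuousOn w UpperH :=
    hv_smooth.continuousOn.sub (continuousOn_const.mul (auxPhi_continuousOn m))
  obtain ⟨z₀, hz₀K, hz₀max⟩ := (isCompact_closedBall _ _).exists_isMaxOn ⟨Complex.I, hIK⟩
    (hwcont.mono hKUpper)
  have hz₀ : z₀ ∈ UpperH := hKUpper hz₀K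
  have hy₀ : 0 < z₀.im := hz₀
  have hglobal : ∀ z ∈ UpperH, w z ≤ w z₀ := by
    intro z hz
    by_cases hzK : z ∈ K
    · exact hz₀max hzK
    · have hz' : 0 < z.im := hz
      have hgt : R < auxPhi0 z := by
        by_contra hle; push_neg at hle; exact hzK (hφle z hz hle)
      have h2M : 2*M < ε * Real.log (auxPhi0 z) := by
        have h1 : Real.exp (2*M/ε) < auxPhi0 z := by
          simp only [hR] at hgt; linarith
        have h2 : 2*M/ε < Real.log (auxPhi0 z) := by
          rw [← Real.log_exp (2*M/ε)]
          exact Real.log_lt_log (Real.exp_pos _) h1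
        calc 2*M = ε * (2*M/ε) := by field_simp
          _ < ε * Real.log (auxPhi0 z) := by exact (mul_lt_mul_iff_right₀ hε).2 h2
      have hvz : v z ≤ M := le_trans (le_abs_self _) (hM z hz)
      have hwz : w z < -M - ε*(2/m) := by
        have : w z = v z - ε * (Real.log (auxPhi0 z) + 2/m) := rfl
        rw [this]
        nlinarith
      have hwI : -M - ε*(2/m) ≤ w Complex.I := by
        have hvI : -M ≤ v Complex.I := neg_le_of_abs_le (hM _ hIH)
        have hφI : φ Complex.I = 2/m := by
          simp only [hφ, auxPhi, auxPhi0_I, Real.log_one]; ring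
        have : w Complex.I = v Complex.I - ε * φ Complex.I := rfl
        rw [this, hφI]
        linarith
      exact le_trans hwz.le (le_trans hwI (hz₀max hIK))
  -- smoothness of the lines through z₀
  have hvCD : ContDiffAt ℝ 2 v z₀ := hv_smooth.contDiffAt (hopen.mem_nhds hz₀)
  have hlineX : ContDiff ℝ 2 (fun t : ℝ => z₀ + (t:ℂ)) :=
    contDiff_const.add Complex.ofRealCLM.contDiff
  have hlineY : ContDiff ℝ 2 (fun t : ℝ => z₀ + (t:ℂ)*Complex.I) :=
    contDiff_const.add (Complex.ofRealCLM.contDiff.mul contDiff_const)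
  have hvX : ContDiffAt ℝ 2 (fun t : ℝ => v (z₀ + (t:ℂ))) 0 := by
    exact ContDiffAt.comp (g := v) (f := fun t : ℝ => z₀ + (t:ℂ)) 0
      (by simpa using hvCD) hlineX.contDiffAt
  have hvY : ContDiffAt ℝ 2 (fun t : ℝ => v (z₀ + (t:ℂ)*Complex.I)) 0 := by
    exact ContDiffAt.comp (g := v) (f := fun t : ℝ => z₀ + (t:ℂ)*Complex.I) 0
      (by simpa using hvCD) hlineY.contDiffAt
  have hφX := auxPhi_contDiffAt_lineX m z₀ hy₀
  have hφY := auxPhi_contDiffAt_lineY m z₀ hy₀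
  -- local max along the lines
  have h00X : z₀ + ((0:ℝ):ℂ) = z₀ := by simp
  have h00Y : z₀ + ((0:ℝ):ℂ)*Complex.I = z₀ := by simp
  have hmaxX : IsLocalMax (fun t : ℝ => v (z₀ + (t:ℂ)) - ε * φ (z₀ + (t:ℂ))) 0 := by
    apply Filter.Eventually.of_forall
    intro t
    have hmem : z₀ + (t:ℂ) ∈ UpperH := by
      simp only [UpperH, Set.mem_setOf_eq, Complex.add_im, Complex.ofReal_im, add_zero]
      exact hy₀
    have := hglobal _ hmem
    simp only [hw] at this
    simpa [h00X] using this
  have hmaxY : IsLocalMax (fun t : ℝ => v (z₀ + (t:ℂ)*Complex.I) - ε * φ (z₀ + (t:ℂ)*Complex.I)) 0 := by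
    filter_upwards [eventually_abs_sub_lt 0 hy₀] with t ht
    rw [sub_zero] at ht
    have hmem : z₀ + (t:ℂ)*Complex.I ∈ UpperH := by
      simp only [UpperH, Set.mem_setOf_eq, Complex.add_im, Complex.mul_I_im, Complex.ofReal_re]
      have := abs_lt.1 ht
      linarith
    have := hglobal _ hmem
    simp only [hw] at this
    simpa [h00Y] using this
  have hwX := iteratedDeriv_two_nonpos_of_isLocalMax (hvX.sub (contDiffAt_const.mul hφX)) hmaxX
  have hwY := iteratedDeriv_two_nonpos_of_isLocalMax (hvY.sub (contDiffAt_const.mul hφY)) hmaxY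
  have hsplitX := iteratedDeriv_two_sub_const_mul hvX hφX ε
  have hsplitY := iteratedDeriv_two_sub_const_mul hvY hφY ε
  rw [hsplitX] at hwX
  rw [hsplitY] at hwY
  -- conclude the pointwise inequality at z₀
  have hLv : hypLaplacian v z₀ = c z₀ * v z₀ := by
    have := hv_eq z₀ hz₀; linarith
  have hLφ := hypLaplacian_auxPhi_le m z₀ hy₀
  have hsum : iteratedDeriv 2 (fun t : ℝ => v (z₀ + (t:ℂ))) 0
      + iteratedDeriv 2 (fun t : ℝ => v (z₀ + (t:ℂ)*Complex.I)) 0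
      ≤ ε * (iteratedDeriv 2 (fun t : ℝ => φ (z₀ + (t:ℂ))) 0
      + iteratedDeriv 2 (fun t : ℝ => φ (z₀ + (t:ℂ)*Complex.I)) 0) := by
    linarith
  have hineq : c z₀ * v z₀ ≤ 2*ε := by
    have hmul := mul_le_mul_of_nonneg_left hsum (sq_nonneg z₀.im)
    have hlap1 : hypLaplacian v z₀ ≤ ε * hypLaplacian φ z₀ := by
      rw [hypLaplacian, hypLaplacian]
      calc z₀.im^2 * (iteratedDeriv 2 (fun t : ℝ => v (z₀ + (t:ℂ))) 0
          + iteratedDeriv 2 (fun t : ℝ => v (z₀ + (t:ℂ)*Complex.I)) 0)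
          ≤ z₀.im^2 * (ε * (iteratedDeriv 2 (fun t : ℝ => φ (z₀ + (t:ℂ))) 0
          + iteratedDeriv 2 (fun t : ℝ => φ (z₀ + (t:ℂ)*Complex.I)) 0)) := hmul
        _ = ε * (z₀.im^2 * (iteratedDeriv 2 (fun t : ℝ => φ (z₀ + (t:ℂ))) 0
          + iteratedDeriv 2 (fun t : ℝ => φ (z₀ + (t:ℂ)*Complex.I)) 0)) := by ring
    have hlap2 : ε * hypLaplacian φ z₀ ≤ ε * 2 := mul_le_mul_of_nonneg_left hLφ hε.le
    rw [hLv] at hlap1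
    linarith
  have hwz₀ : w z₀ ≤ 0 := by
    have hφpos := hphipos z₀ hz₀
    rcases le_or_gt (v z₀) 0 with hc0 | hc0
    · have : w z₀ = v z₀ - ε * φ z₀ := rfl
      rw [this]
      nlinarith
    · have h1 : m * v z₀ ≤ c z₀ * v z₀ := mul_le_mul_of_nonneg_right (hc_low z₀ hz₀) hc0.le
      have h2 : v z₀ ≤ 2*ε/m := by
        rw [le_div_iff₀ hm]
        nlinarith
      have h3 : 2*ε/m ≤ ε * φ z₀ := by
        have h4 := auxPhi_ge m hy₀
        calc 2*ε/m = ε*(2/m) := by ring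
          _ ≤ ε * φ z₀ := mul_le_mul_of_nonneg_left h4 hε.le
      have : w z₀ = v z₀ - ε * φ z₀ := rfl
      rw [this]
      linarith
  have hfinal := hglobal z₁ hz₁
  have : w z₁ = v z₁ - ε * φ z₁ := rfl
  rw [this] at hfinal
  linarith

end Main

/-- Injectivity of the linearized operator `L v = −Δ_ℍ v + c·v` on bounded
`C²` functions on the upper half-plane. -/
theorem linearized_injective
    (m : ℝ) (hm : 0 < m)
    (c : ℂ → ℝ) (hc_cont : ContinuousOn c UpperH)
    (hc_low : ∀ z ∈ UpperH, m ≤ c z)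
    (v : ℂ → ℝ)
    (hv_smooth : ContDiffOn ℝ 2 v UpperH)
    (hv_bdd : ∃ M : ℝ, ∀ z ∈ UpperH, |v z| ≤ M)
    (hv_eq : ∀ z ∈ UpperH, -hypLaplacian v z + c z * v z = 0) :
    ∀ z ∈ UpperH, v z = 0 := by
  obtain ⟨M, hM⟩ := hv_bdd
  intro z hz
  have h1 := key_nonpos m hm c hc_low v hv_smooth M hM hv_eq z hz
  have hneg_eq : ∀ z ∈ UpperH, -hypLaplacian (fun w => -v w) z + c z * (-v z) = 0 := by
    intro z hz
    have hL : hypLaplacian (fun w => -v w) z = -hypLaplacian v z := by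
      simp only [hypLaplacian]
      rw [iteratedDeriv_fun_neg, iteratedDeriv_fun_neg]
      ring
    rw [hL]
    have := hv_eq z hz
    linarith
  have h2 := key_nonpos m hm c hc_low (fun w => -v w) hv_smooth.neg M
    (fun z hz => by rw [abs_neg]; exact hM z hz) hneg_eq z hz
  simp only [neg_nonpos] at h2
  linarith [h2]
end
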